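/- Let n ≥ 2 be an integer and let a, b be real numbers with a > 0 and 0 < b < 1. Set ω_k = e^{2πik/n} for k = 1, …, n−1. Then F_D^{(n−1)}(a; b, …, b; 1+a−b | ω_1, …, ω_{n−1}) = Γ(1+a−b)·Γ(1+a/n) / (Γ(1+a)·Γ(1+a/n−b)). -/

import Mathlib

open MeasureTheory

noncomputable def lauricellaFD (n : ℕ) (a : ℂ) (b : Fin n → ℂ) (c : ℂ) (x : Fin n → ℂ) : ℂ :=
  (Complex.Gamma c / (Complex.Gamma a * Complex.Gamma (c - a))) *
    ∫ u in (0:ℝ)..1, (u : ℂ) ^ (a - 1) * ((1 : ℂ) - u) ^ (c - a - 1) *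
      ∏ k, ((1 : ℂ) - x k * u) ^ (-(b k))

noncomputable def appellF1 (a b₁ b₂ c x₁ x₂ : ℂ) : ℂ :=
  lauricellaFD 2 a ![b₁, b₂] c ![x₁, x₂]

noncomputable def ellipticK (k : ℝ) : ℝ :=
  ∫ θ in (0:ℝ)..(Real.pi/2), (1 - k ^ 2 * Real.sin θ ^ 2) ^ (-(1:ℝ)/2)

open Complex Finset in
lemma aux_prod_root (n : ℕ) (hn : 0 < n) (z : ℂ) :
    ∏ k ∈ Finset.range n, (z - Complex.exp (((2 * Real.pi / n : ℝ)) * Complex.I) ^ k)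
      = z ^ n - 1 := by
  haveI : NeZero n := ⟨hn.ne'⟩
  have hζ : IsPrimitiveRoot (Complex.exp (((2 * Real.pi / n : ℝ)) * Complex.I)) n := by
    have h := Complex.isPrimitiveRoot_exp n hn.ne'
    convert h using 2
    push_cast
    ring
  have hpoly := Polynomial.X_pow_sub_one_eq_prod hn hζ
  have hev := congrArg (Polynomial.eval z) hpoly
  simp only [Polynomial.eval_sub, Polynomial.eval_pow, Polynomial.eval_X, Polynomial.eval_one,
    Polynomial.eval_prod, Polynomial.eval_C] at hev
  rw [hev]
  refine Finset.prod_nbij (fun k => Complex.exp (((2 * Real.pi / n : ℝ)) * Complex.I) ^ k)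
    (fun k hk => ?_) (fun i hi j hj e => hζ.injOn_pow hi hj e) (fun μ hμ => ?_) (fun k hk => rfl)
  · rw [Polynomial.mem_nthRootsFinset hn, pow_right_comm, hζ.pow_eq_one, one_pow]
  · obtain ⟨i, hi, rfl⟩ := hζ.eq_pow_of_pow_eq_one ((Polynomial.mem_nthRootsFinset hn 1).1 hμ)
    exact ⟨i, by simpa using hi, rfl⟩

open Complex Finset in
lemma aux_prod_one_sub (n : ℕ) (hn : 0 < n) (z : ℂ) (hz : z ≠ 0) :
    ∏ k ∈ Finset.range n, (1 - Complex.exp (((2 * Real.pi / n : ℝ)) * Complex.I) ^ k * z)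
      = 1 - z ^ n := by
  calc ∏ k ∈ range n, (1 - Complex.exp (((2 * Real.pi / n : ℝ)) * Complex.I) ^ k * z)
      = ∏ k ∈ range n, (z * (z⁻¹ - Complex.exp (((2 * Real.pi / n : ℝ)) * Complex.I) ^ k)) := by
        refine Finset.prod_congr rfl fun k _ => ?_
        rw [mul_sub, mul_inv_cancel₀ hz, mul_comm z]
    _ = z ^ n * ((z⁻¹) ^ n - 1) := by
        rw [Finset.prod_mul_distrib, Finset.prod_const, Finset.card_range,
          aux_prod_root n hn]
    _ = 1 - z ^ n := by
        rw [mul_sub, mul_one, ← mul_pow, mul_inv_cancel₀ hz, one_pow]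

open Complex Finset in
lemma aux_key (n m : ℕ) (hmn : m + 1 = n) (b : ℝ) (u : ℝ) (hu0 : 0 < u) (hu1 : u < 1) :
    ∏ k : Fin m, ((1 : ℂ) - Complex.exp (((2 * Real.pi / n : ℝ)) * Complex.I) ^ (k.1 + 1) * u)
        ^ (-(b : ℂ))
      = ((((1 - u ^ n) / (1 - u) : ℝ)) : ℂ) ^ (-(b : ℂ)) := by
  have hn0 : 0 < n := by omega
  set ζ : ℂ := Complex.exp (((2 * Real.pi / n : ℝ)) * Complex.I) with hζdef
  have hζabs : ‖ζ‖ = 1 := Complex.norm_exp_ofReal_mul_I _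
  have hζn : ζ ^ n = 1 := by
    have h := Complex.isPrimitiveRoot_exp n hn0.ne'
    have he : ζ = Complex.exp (2 * Real.pi * Complex.I / n) := by
      rw [hζdef]; congr 1; push_cast; ring
    rw [he]; exact h.pow_eq_one
  have habs : ∀ j : ℕ, ‖ζ ^ j‖ = 1 := fun j => by rw [norm_pow, hζabs, one_pow]
  have hone : (1 : ℝ) - u ≠ 0 := by linarith
  have hP : (0 : ℝ) < (1 - u ^ n) / (1 - u) := by
    apply div_pos _ (by linarith)
    have := pow_lt_one₀ hu0.le hu1 hn0.ne'
    linarith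
  -- the product of the bases
  have hprod : ∏ k : Fin m, ((1 : ℂ) - ζ ^ (k.1 + 1) * u)
      = ((((1 - u ^ n) / (1 - u) : ℝ)) : ℂ) := by
    have hfin : ∏ k : Fin m, ((1 : ℂ) - ζ ^ (k.1 + 1) * u)
        = ∏ k ∈ range m, ((1 : ℂ) - ζ ^ (k + 1) * u) :=
      Fin.prod_univ_eq_prod_range (fun j => (1 : ℂ) - ζ ^ (j + 1) * u) m
    have h0' : (∏ k ∈ range m, ((1:ℂ) - ζ ^ (k + 1) * u)) * (1 - (u : ℂ)) = 1 - (u : ℂ) ^ n := by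
      calc (∏ k ∈ range m, ((1:ℂ) - ζ ^ (k + 1) * u)) * (1 - (u:ℂ))
          = ∏ k ∈ range (m + 1), ((1:ℂ) - ζ ^ k * u) := by
            rw [Finset.prod_range_succ']; simp
        _ = ∏ k ∈ range n, ((1:ℂ) - ζ ^ k * u) := by rw [hmn]
        _ = 1 - (u:ℂ) ^ n := aux_prod_one_sub n hn0 (u : ℂ) (by exact_mod_cast hu0.ne')
    have hcast : ((((1 - u ^ n) / (1 - u) : ℝ)) : ℂ) = (1 - (u:ℂ) ^ n) / (1 - (u:ℂ)) := by
      push_cast; ring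
    have hu1' : (1 : ℂ) - (u : ℂ) ≠ 0 := by
      rw [sub_ne_zero]
      exact_mod_cast hu1.ne'
    rw [hfin, hcast, eq_div_iff hu1']
    exact h0'
  have hre : ∀ j : ℕ, 0 < ((1 : ℂ) - ζ ^ j * u).re := by
    intro j
    have h1 : |(ζ ^ j).re| ≤ 1 := by
      rw [← habs j]; exact Complex.abs_re_le_norm _
    have h2 : ((1 : ℂ) - ζ ^ j * u).re = 1 - (ζ ^ j).re * u := by
      simp [Complex.sub_re, Complex.mul_re]
    rw [h2]
    rcases abs_le.1 h1 with ⟨hl, hr⟩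
    nlinarith
  have hne : ∀ j : ℕ, ((1 : ℂ) - ζ ^ j * u) ≠ 0 := by
    intro j h
    have := hre j
    rw [h] at this
    simp at this
  have hargne : ∀ j : ℕ, ((1 : ℂ) - ζ ^ j * u).arg ≠ Real.pi := by
    intro j h
    have := (Complex.arg_eq_pi_iff.1 h).1
    linarith [hre j]
  have hconjz : ∀ j : ℕ, j ≤ n → ζ ^ (n - j) = (starRingEnd ℂ) (ζ ^ j) := by
    intro j hj
    have hz0 : ζ ^ j ≠ 0 := pow_ne_zero _ (Complex.exp_ne_zero _)
    have e1 : ζ ^ j * ζ ^ (n - j) = 1 := by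
      rw [← pow_add, show j + (n - j) = n by omega, hζn]
    have e2 : ζ ^ j * (starRingEnd ℂ) (ζ ^ j) = 1 := by
      rw [Complex.mul_conj, Complex.normSq_eq_norm_sq, habs]
      norm_num
    exact mul_left_cancel₀ hz0 (e1.trans e2.symm)
  set invo : Fin m → Fin m := fun k => ⟨m - 1 - k.1, by omega⟩ with hinvo
  have hconj : ∀ k : Fin m, ((1 : ℂ) - ζ ^ ((invo k).1 + 1) * u)
      = (starRingEnd ℂ) ((1 : ℂ) - ζ ^ (k.1 + 1) * u) := by
    intro k
    have hk := k.2
    have hidx : (invo k).1 + 1 = n - (k.1 + 1) := by simp [hinvo]; omega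
    rw [hidx, hconjz (k.1 + 1) (by omega)]
    simp [map_sub, map_mul, Complex.conj_ofReal]
  have hargsum : ∑ k : Fin m, ((1 : ℂ) - ζ ^ (k.1 + 1) * u).arg = 0 := by
    have hg1 : ∀ k : Fin m, ((1 : ℂ) - ζ ^ (k.1 + 1) * u).arg
        + ((1 : ℂ) - ζ ^ ((invo k).1 + 1) * u).arg = 0 := by
      intro k
      rw [hconj k, Complex.arg_conj, if_neg (hargne (k.1 + 1))]
      ring
    refine Finset.sum_ninvolution invo hg1 (fun k hk hco => ?_) (fun k => Finset.mem_univ _)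
      (fun k => ?_)
    · have := hg1 k
      rw [hco] at this
      exact absurd (by linarith) hk
    · have hk := k.2
      apply Fin.ext
      simp [hinvo]
      omega
  have hlogsum : ∑ k : Fin m, Complex.log ((1 : ℂ) - ζ ^ (k.1 + 1) * u)
      = ((Real.log ((1 - u ^ n) / (1 - u)) : ℝ) : ℂ) := by
    apply Complex.ext
    · rw [Complex.re_sum]
      simp only [Complex.log_re]
      rw [← Real.log_prod (fun k _ => (norm_ne_zero_iff.2 (hne (k.1 + 1)))), Complex.ofReal_re]
      congr 1
      rw [← norm_prod, hprod, Complex.norm_real, Real.norm_eq_abs, abs_of_pos hP]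
    · rw [Complex.im_sum]
      simp only [Complex.log_im]
      rw [hargsum]
      simp
  calc ∏ k : Fin m, ((1 : ℂ) - ζ ^ (k.1 + 1) * u) ^ (-(b : ℂ))
      = ∏ k : Fin m, Complex.exp (Complex.log ((1 : ℂ) - ζ ^ (k.1 + 1) * u) * (-(b : ℂ))) :=
        Finset.prod_congr rfl fun k _ => Complex.cpow_def_of_ne_zero (hne (k.1 + 1)) _
    _ = Complex.exp ((∑ k : Fin m, Complex.log ((1 : ℂ) - ζ ^ (k.1 + 1) * u)) * (-(b : ℂ))) := by
        rw [Finset.sum_mul, Complex.exp_sum]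
    _ = ((((1 - u ^ n) / (1 - u) : ℝ)) : ℂ) ^ (-(b : ℂ)) := by
        rw [hlogsum, Complex.cpow_def_of_ne_zero (Complex.ofReal_ne_zero.2 hP.ne') _,
          Complex.ofReal_log hP.le]

open MeasureTheory in
lemma aux_sub (n : ℕ) (hn : 0 < n) (a b : ℝ) :
    ∫ u in (0:ℝ)..1, u ^ (a - 1) * (1 - u ^ n) ^ (-b)
      = (n : ℝ)⁻¹ * ∫ t in (0:ℝ)..1, t ^ (a / n - 1) * (1 - t) ^ (-b) := by
  have hnR : (0 : ℝ) < n := by exact_mod_cast hn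
  rw [intervalIntegral.integral_of_le zero_le_one, intervalIntegral.integral_of_le zero_le_one,
    MeasureTheory.integral_Ioc_eq_integral_Ioo, MeasureTheory.integral_Ioc_eq_integral_Ioo]
  have himg : (fun u : ℝ => u ^ n) '' Set.Ioo 0 1 = Set.Ioo 0 1 := by
    ext y
    constructor
    · rintro ⟨x, ⟨hx0, hx1⟩, rfl⟩
      exact ⟨pow_pos hx0 n, pow_lt_one₀ hx0.le hx1 hn.ne'⟩
    · rintro ⟨hy0, hy1⟩
      refine ⟨y ^ ((n : ℝ)⁻¹), ⟨Real.rpow_pos_of_pos hy0 _,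
        Real.rpow_lt_one hy0.le hy1 (by positivity)⟩, ?_⟩
      show (y ^ ((n:ℝ)⁻¹)) ^ n = y
      rw [← Real.rpow_natCast (y ^ ((n:ℝ)⁻¹)) n, ← Real.rpow_mul hy0.le,
        inv_mul_cancel₀ hnR.ne', Real.rpow_one]
  have hinj : Set.InjOn (fun u : ℝ => u ^ n) (Set.Ioo 0 1) :=
    ((pow_left_strictMonoOn₀ hn.ne').injOn).mono (fun x hx => le_of_lt hx.1)
  have hcv := integral_image_eq_integral_abs_deriv_smul measurableSet_Ioo
    (fun x _ => (hasDerivAt_pow n x).hasDerivWithinAt) hinj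
    (fun t => t ^ (a / n - 1) * (1 - t) ^ (-b))
  rw [himg] at hcv
  rw [hcv, ← smul_eq_mul, ← MeasureTheory.integral_smul]
  apply MeasureTheory.setIntegral_congr_fun measurableSet_Ioo
  intro u hu
  obtain ⟨hu0, hu1⟩ := hu
  have habs : |(n : ℝ) * u ^ (n - 1)| = (n : ℝ) * u ^ (n - 1) :=
    abs_of_nonneg (by positivity)
  simp only [smul_eq_mul, habs]
  have h1 : ((u : ℝ) ^ n) ^ (a / n - 1) = u ^ (a - n) := by
    rw [← Real.rpow_natCast u n, ← Real.rpow_mul hu0.le]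
    congr 1
    field_simp
  have h2 : (u : ℝ) ^ (n - 1) = u ^ ((n : ℝ) - 1) := by
    rw [← Real.rpow_natCast u (n - 1)]
    congr 1
    push_cast [Nat.cast_sub hn]
    ring
  rw [h1, h2]
  rw [show u ^ (a - 1) = u ^ (((n:ℝ) - 1) + (a - n)) from by ring_nf,
    Real.rpow_add hu0]
  field_simp

theorem kummer_lauricella (n : ℕ) (hn : 2 ≤ n) (a b : ℝ) (ha : 0 < a)
    (hb0 : 0 < b) (hb1 : b < 1) :
    lauricellaFD (n - 1) (a : ℂ) (fun _ => (b : ℂ)) (1 + a - b)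
      (fun k => Complex.exp (2 * Real.pi * Complex.I * ((k.1 : ℂ) + 1) / (n : ℂ))) =
    Complex.Gamma (1 + (a : ℂ) - b) * Complex.Gamma (1 + (a : ℂ) / n) /
      (Complex.Gamma (1 + (a : ℂ)) * Complex.Gamma (1 + (a : ℂ) / n - b)) := by
  have hn0 : 0 < n := by omega
  have hnR : (0 : ℝ) < n := by exact_mod_cast hn0
  have hmn : (n - 1) + 1 = n := by omega
  set ζ : ℂ := Complex.exp (((2 * Real.pi / n : ℝ)) * Complex.I) with hζdef
  have hb : -(b : ℂ) ≠ 0 := neg_ne_zero.2 (Complex.ofReal_ne_zero.2 hb0.ne')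
  have hx : ∀ k : Fin (n - 1),
      Complex.exp (2 * (Real.pi : ℂ) * Complex.I * ((k.1 : ℂ) + 1) / n) = ζ ^ (k.1 + 1) := by
    intro k
    rw [hζdef, ← Complex.exp_nat_mul]
    congr 1
    push_cast
    field_simp
  have hexp : (1 + (a : ℂ) - b) - a - 1 = -(b : ℂ) := by ring
  -- step A : the complex integral is the real integral
  have hIcongr : (∫ u in (0:ℝ)..1, (u : ℂ) ^ ((a : ℂ) - 1)
        * ((1 : ℂ) - u) ^ ((1 + (a : ℂ) - b) - (a : ℂ) - 1)
        * ∏ k : Fin (n - 1),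
          ((1 : ℂ) - Complex.exp (2 * (Real.pi : ℂ) * Complex.I * ((k.1 : ℂ) + 1) / n) * u)
            ^ (-(b : ℂ)))
      = ((∫ u in (0:ℝ)..1, u ^ (a - 1) * (1 - u ^ n) ^ (-b) : ℝ) : ℂ) := by
    rw [← intervalIntegral.integral_ofReal]
    apply intervalIntegral.integral_congr_ae
    apply MeasureTheory.ae_of_all
    intro u hu
    rw [Set.uIoc_of_le zero_le_one] at hu
    obtain ⟨hu0, hu1⟩ := hu
    simp only [hx, hexp]
    rcases eq_or_lt_of_le hu1 with h1 | h1
    · subst h1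
      rw [show ((1:ℂ) - (1:ℝ)) = 0 by norm_num, Complex.zero_cpow hb]
      rw [show ((1:ℝ) - (1:ℝ)^n) = 0 by norm_num, Real.zero_rpow (neg_ne_zero.2 hb0.ne')]
      simp
    · have hP : (0 : ℝ) < (1 - u ^ n) / (1 - u) := by
        apply div_pos _ (by linarith)
        have := pow_lt_one₀ hu0.le h1 hn0.ne'
        linarith
      rw [aux_key n (n-1) hmn b u hu0 h1]
      rw [show ((1:ℂ) - (u:ℝ)) = ((1 - u : ℝ) : ℂ) by push_cast; ring,
        show ((a:ℂ) - 1) = ((a - 1 : ℝ) : ℂ) by push_cast; ring,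
        show (-(b:ℂ)) = ((-b : ℝ) : ℂ) by push_cast; ring,
        ← Complex.ofReal_cpow hu0.le, ← Complex.ofReal_cpow (by linarith : (0:ℝ) ≤ 1 - u),
        ← Complex.ofReal_cpow hP.le, ← Complex.ofReal_mul, ← Complex.ofReal_mul]
      congr 1
      rw [mul_assoc, ← Real.mul_rpow (by linarith) hP.le,
        show (1 - u) * ((1 - u ^ n) / (1 - u)) = 1 - u ^ n from by
          rw [mul_comm, div_mul_cancel₀ _ (by linarith : (1:ℝ) - u ≠ 0)]]
  -- step C : beta integral
  have hbetaJ : Complex.betaIntegral ((a / n : ℝ) : ℂ) ((1 - b : ℝ) : ℂ)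
      = ((∫ t in (0:ℝ)..1, t ^ (a / n - 1) * (1 - t) ^ (-b) : ℝ) : ℂ) := by
    rw [Complex.betaIntegral, ← intervalIntegral.integral_ofReal]
    apply intervalIntegral.integral_congr_ae
    apply MeasureTheory.ae_of_all
    intro t ht
    rw [Set.uIoc_of_le zero_le_one] at ht
    obtain ⟨ht0, ht1⟩ := ht
    rw [show ((a / n : ℝ) : ℂ) - 1 = ((a / n - 1 : ℝ) : ℂ) by push_cast; ring,
      show ((1 - b : ℝ) : ℂ) - 1 = ((-b : ℝ) : ℂ) by push_cast; ring,
      show (1:ℂ) - (t : ℝ) = ((1 - t : ℝ) : ℂ) by push_cast; ring,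
      ← Complex.ofReal_cpow ht0.le, ← Complex.ofReal_cpow (by linarith : (0:ℝ) ≤ 1 - t),
      ← Complex.ofReal_mul]
  -- Gamma facts
  have hGane : Complex.Gamma (a : ℂ) ≠ 0 :=
    Complex.Gamma_ne_zero_of_re_pos (by simp [Complex.ofReal_re, ha])
  have hG2ne : Complex.Gamma ((1 - b : ℝ) : ℂ) ≠ 0 :=
    Complex.Gamma_ne_zero_of_re_pos (by simp [Complex.ofReal_re]; linarith)
  have hG4ne : Complex.Gamma (((a / n : ℝ) : ℂ) + ((1 - b : ℝ) : ℂ)) ≠ 0 := by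
    apply Complex.Gamma_ne_zero_of_re_pos
    simp only [Complex.add_re, Complex.ofReal_re]
    have : (0:ℝ) < a / n := by positivity
    linarith
  have hbeta := Complex.Gamma_mul_Gamma_eq_betaIntegral (s := ((a / n : ℝ) : ℂ))
    (t := ((1 - b : ℝ) : ℂ)) (by simp [Complex.ofReal_re]; positivity)
    (by simp [Complex.ofReal_re]; linarith)
  have hBval : Complex.betaIntegral ((a / n : ℝ) : ℂ) ((1 - b : ℝ) : ℂ)
      = Complex.Gamma ((a / n : ℝ) : ℂ) * Complex.Gamma ((1 - b : ℝ) : ℂ)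
        / Complex.Gamma (((a / n : ℝ) : ℂ) + ((1 - b : ℝ) : ℂ)) := by
    rw [eq_div_iff hG4ne, mul_comm]
    exact hbeta.symm
  have hGa : Complex.Gamma (1 + (a : ℂ)) = (a : ℂ) * Complex.Gamma (a : ℂ) := by
    rw [show (1:ℂ) + (a:ℂ) = (a:ℂ) + 1 by ring,
      Complex.Gamma_add_one _ (Complex.ofReal_ne_zero.2 ha.ne')]
  have hGan : Complex.Gamma (1 + (a : ℂ) / n)
      = ((a / n : ℝ) : ℂ) * Complex.Gamma ((a / n : ℝ) : ℂ) := by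
    rw [show (1:ℂ) + (a:ℂ) / n = ((a / n : ℝ) : ℂ) + 1 by push_cast; ring,
      Complex.Gamma_add_one _ (Complex.ofReal_ne_zero.2 (by positivity))]
  have hG4arg : (1:ℂ) + (a:ℂ) / n - (b:ℂ) = ((a / n : ℝ) : ℂ) + ((1 - b : ℝ) : ℂ) := by
    push_cast; ring
  have hca : (1 + (a:ℂ) - (b:ℂ)) - (a:ℂ) = ((1 - b : ℝ) : ℂ) := by push_cast; ring
  rw [lauricellaFD, hIcongr, aux_sub n hn0 a b, Complex.ofReal_mul, Complex.ofReal_inv,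
    Complex.ofReal_natCast, ← hbetaJ, hBval, hca, hGa, hGan, hG4arg]
  have hnne : (n : ℂ) ≠ 0 := Nat.cast_ne_zero.2 hn0.ne'
  have hane : (a : ℂ) ≠ 0 := Complex.ofReal_ne_zero.2 ha.ne'
  have key2 : ∀ (g2 g3 g4 gc gA A N : ℂ), g2 ≠ 0 → g4 ≠ 0 → gA ≠ 0 → A ≠ 0 → N ≠ 0 →
      gc / (gA * g2) * (N⁻¹ * (g3 * g2 / g4)) = gc * (A / N * g3) / ((A * gA) * g4) := by
    intros g2 g3 g4 gc gA A N h2 h4 hA hA' hN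
    field_simp
  rw [show ((a / n : ℝ) : ℂ) = (a : ℂ) / (n : ℂ) by push_cast; ring]
  exact key2 _ _ _ _ _ _ _ hG2ne (by rw [show ((a / n : ℝ) : ℂ) = (a : ℂ) / (n : ℂ) by push_cast; ring] at hG4ne; exact hG4ne) hGane hane hnne
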